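/- arXiv:2108.11438 — 2 statements merged into one kernel-verified Lean document; each statement's English description precedes it below -/
import Mathlib

section
/- The divided difference operators satisfy the braid relation ∂_i ∂_{i+1} ∂_i = ∂_{i+1} ∂_i ∂_{i+1}, and the commutation relation ∂_i ∂_j = ∂_j ∂_i whenever |i - j| ≥ 2. -/
open MvPolynomial Classical

/-- The action of the simple transposition `s_i` on polynomials, swapping `x_i` and `x_{i+1}`. -/
noncomputable def swapPoly (i : ℕ) (f : MvPolynomial ℕ ℤ) : MvPolynomial ℕ ℤ :=
  rename (Equiv.swap i (i + 1)) f

/-- The divided difference operator `∂_i f = (f - s_i f)/(x_i - x_{i+1})`. -/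
noncomputable def dd (i : ℕ) (f : MvPolynomial ℕ ℤ) : MvPolynomial ℕ ℤ :=
  if h : (X i - X (i + 1)) ∣ (f - swapPoly i f) then h.choose else 0

set_option synthInstance.maxHeartbeats 1000000
set_option maxHeartbeats 4000000

namespace DDAux

abbrev R := MvPolynomial ℕ ℤ
abbrev K := FractionRing R

noncomputable def ι : R →+* K := algebraMap R K

noncomputable def S (i : ℕ) : K ≃+* K :=
  IsFractionRing.ringEquivOfRingEquiv (renameEquiv ℤ (Equiv.swap i (i+1))).toRingEquiv

lemma S_alg (i : ℕ) (f : R) : S i (ι f) = ι (swapPoly i f) := by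
  simp [S, ι, swapPoly, IsFractionRing.ringEquivOfRingEquiv_algebraMap]

lemma dvd_sub_swap (i : ℕ) (f : R) : (X i - X (i+1)) ∣ (f - swapPoly i f) := by
  induction f using MvPolynomial.induction_on with
  | C a => simp [swapPoly]
  | add p q hp hq =>
      have : p + q - swapPoly i (p + q) = (p - swapPoly i p) + (q - swapPoly i q) := by
        simp [swapPoly]; ring
      rw [this]; exact dvd_add hp hq
  | mul_X p j hp =>
      have h1 : p * X j - swapPoly i (p * X j)
          = (p - swapPoly i p) * X j + swapPoly i p * (X j - X (Equiv.swap i (i+1) j)) := by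
        simp [swapPoly]; ring
      rw [h1]
      refine dvd_add (Dvd.dvd.mul_right hp _) (Dvd.dvd.mul_left ?_ _)
      rcases eq_or_ne j i with rfl | hji
      · simp
      rcases eq_or_ne j (i+1) with rfl | hji1
      · simp only [Equiv.swap_apply_right]
        exact ⟨-1, by ring⟩
      · rw [Equiv.swap_apply_of_ne_of_ne hji hji1]; simp

lemma dd_mul (i : ℕ) (f : R) : dd i f * (X i - X (i+1)) = f - swapPoly i f := by
  rw [dd, dif_pos (dvd_sub_swap i f), mul_comm]
  exact (dvd_sub_swap i f).choose_spec.symm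

lemma ι_inj : Function.Injective ι := IsFractionRing.injective R K

lemma eXne {a b : ℕ} (h : a ≠ b) : ι (X a) ≠ ι (X b) :=
  fun he => h (X_injective (ι_inj he))

noncomputable def Dk (i : ℕ) (g : K) : K :=
  (g - S i g) * (ι (X i) - ι (X (i+1)))⁻¹

lemma hdd (i : ℕ) (f : R) : ι (dd i f) = Dk i (ι f) := by
  have h := congrArg ι (dd_mul i f)
  rw [map_mul, map_sub, map_sub] at h
  rw [Dk, S_alg, ← h, mul_assoc, mul_inv_cancel₀, mul_one]
  exact sub_ne_zero.mpr (eXne (by omega))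

set_option maxHeartbeats 2000000 in
lemma swapPoly_braid (i : ℕ) (f : R) :
    swapPoly i (swapPoly (i+1) (swapPoly i f)) = swapPoly (i+1) (swapPoly i (swapPoly (i+1) f)) := by
  simp only [swapPoly, rename_rename]
  have hfun : (⇑(Equiv.swap i (i+1)) ∘ ⇑(Equiv.swap (i+1) (i+1+1)) ∘ ⇑(Equiv.swap i (i+1)))
      = (⇑(Equiv.swap (i+1) (i+1+1)) ∘ ⇑(Equiv.swap i (i+1)) ∘ ⇑(Equiv.swap (i+1) (i+1+1))) := by
    funext j
    simp only [Function.comp_apply, Equiv.swap_apply_def]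
    split_ifs <;> omega
  rw [hfun]

lemma swapPoly_invol (i : ℕ) (f : R) : swapPoly i (swapPoly i f) = f := by
  simp only [swapPoly, rename_rename]
  have hfun : (⇑(Equiv.swap i (i+1)) ∘ ⇑(Equiv.swap i (i+1))) = id := by
    funext j
    simp [Equiv.swap_apply_self]
  rw [hfun, rename_id, AlgHom.id_apply]

set_option maxHeartbeats 2000000 in
lemma swapPoly_comm (i j : ℕ) (h : i + 2 ≤ j) (f : R) :
    swapPoly i (swapPoly j f) = swapPoly j (swapPoly i f) := by
  simp only [swapPoly, rename_rename]
  have hfun : (⇑(Equiv.swap i (i+1)) ∘ ⇑(Equiv.swap j (j+1)))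
      = (⇑(Equiv.swap j (j+1)) ∘ ⇑(Equiv.swap i (i+1))) := by
    funext k
    simp only [Function.comp_apply, Equiv.swap_apply_def]
    split_ifs <;> omega
  rw [hfun]

lemma S_braid (i : ℕ) (g : K) : S i (S (i+1) (S i g)) = S (i+1) (S i (S (i+1) g)) := by
  have h : (((S i : K →+* K).comp ((S (i+1) : K →+* K).comp (S i : K →+* K))).comp (algebraMap R K))
      = (((S (i+1) : K →+* K).comp ((S i : K →+* K).comp (S (i+1) : K →+* K))).comp (algebraMap R K)) :=
    RingHom.ext fun f => by
      simp only [RingHom.comp_apply, RingHom.coe_coe]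
      show S i (S (i+1) (S i (ι f))) = S (i+1) (S i (S (i+1) (ι f)))
      rw [S_alg, S_alg, S_alg, S_alg, S_alg, S_alg, swapPoly_braid]
  have h2 := IsLocalization.ringHom_ext (nonZeroDivisors R) h
  exact congrArg (fun φ : K →+* K => φ g) h2

@[simp] lemma S_invol (i : ℕ) (g : K) : S i (S i g) = g := by
  have h : (((S i : K →+* K).comp (S i : K →+* K)).comp (algebraMap R K))
      = ((RingHom.id K).comp (algebraMap R K)) :=
    RingHom.ext fun f => by
      simp only [RingHom.comp_apply, RingHom.coe_coe, RingHom.id_apply]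
      show S i (S i (ι f)) = ι f
      rw [S_alg, S_alg, swapPoly_invol]
  have h2 := IsLocalization.ringHom_ext (nonZeroDivisors R) h
  exact congrArg (fun φ : K →+* K => φ g) h2

lemma S_comm (i j : ℕ) (h : i + 2 ≤ j) (g : K) : S i (S j g) = S j (S i g) := by
  have hh : (((S i : K →+* K).comp (S j : K →+* K)).comp (algebraMap R K))
      = (((S j : K →+* K).comp (S i : K →+* K)).comp (algebraMap R K)) :=
    RingHom.ext fun f => by
      simp only [RingHom.comp_apply, RingHom.coe_coe]
      show S i (S j (ι f)) = S j (S i (ι f))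
      rw [S_alg, S_alg, S_alg, S_alg, swapPoly_comm i j h]
  have h2 := IsLocalization.ringHom_ext (nonZeroDivisors R) hh
  exact congrArg (fun φ : K →+* K => φ g) h2

lemma S_X (i j : ℕ) : S i (ι (X j)) = ι (X (Equiv.swap i (i+1) j)) := by
  rw [S_alg]; simp [swapPoly]


section FieldLemmas
variable {F : Type*} [Field F]

lemma comb (x y d e : F) (hd : d ≠ 0) (he : e ≠ 0) :
    x * d⁻¹ - y * e⁻¹ = (x * e - y * d) * (d * e)⁻¹ := by
  field_simp

lemma shift (x d e : F) : (x * d⁻¹) * e⁻¹ = x * (d * e)⁻¹ := by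
  rw [mul_assoc, ← mul_inv]

lemma cross (a b d e : F) (hd : d ≠ 0) (he : e ≠ 0) (h : a * e = b * d) :
    a * d⁻¹ = b * e⁻¹ := by
  rw [inv_eq_one_div, inv_eq_one_div, mul_one_div, mul_one_div, div_eq_div_iff hd he]
  exact h

lemma braid_field (u v w g f2 f3 f4 f5 f6 : F)
    (huv : u - v ≠ 0) (hvw : v - w ≠ 0) (huw : u - w ≠ 0)
    (hvu : v - u ≠ 0) (hwv : w - v ≠ 0) :
    (((g - f2)*(u-v)⁻¹ - (f3 - f5)*(u-w)⁻¹)*(v-w)⁻¹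
      - ((f2 - g)*(v-u)⁻¹ - (f4 - f6)*(v-w)⁻¹)*(u-w)⁻¹)*(u-v)⁻¹
    = (((g - f3)*(v-w)⁻¹ - (f2 - f4)*(u-w)⁻¹)*(u-v)⁻¹
      - ((f3 - g)*(w-v)⁻¹ - (f5 - f6)*(u-v)⁻¹)*(u-w)⁻¹)*(v-w)⁻¹ := by
  rw [comb _ _ _ _ huv huw, comb _ _ _ _ hvu hvw, shift, shift,
      comb _ _ _ _ (mul_ne_zero (mul_ne_zero huv huw) hvw)
        (mul_ne_zero (mul_ne_zero hvu hvw) huw), shift,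
      comb _ _ _ _ hvw huw, comb _ _ _ _ hwv huv, shift, shift,
      comb _ _ _ _ (mul_ne_zero (mul_ne_zero hvw huw) huv)
        (mul_ne_zero (mul_ne_zero hwv huv) huw), shift]
  apply cross
  · exact mul_ne_zero (mul_ne_zero (mul_ne_zero (mul_ne_zero huv huw) hvw)
      (mul_ne_zero (mul_ne_zero hvu hvw) huw)) huv
  · exact mul_ne_zero (mul_ne_zero (mul_ne_zero (mul_ne_zero hvw huw) huv)
      (mul_ne_zero (mul_ne_zero hwv huv) huw)) hvw
  · ring

lemma comm_field (u v p q g f2 f3 f4 : F) (hd1 : u - v ≠ 0) (hd2 : p - q ≠ 0) :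
    ((g - f3)*(p-q)⁻¹ - (f2 - f4)*(p-q)⁻¹)*(u-v)⁻¹
    = ((g - f2)*(u-v)⁻¹ - (f3 - f4)*(u-v)⁻¹)*(p-q)⁻¹ := by
  field_simp
  ring

end FieldLemmas

lemma Dk_braid (i : ℕ) (g : K) :
    Dk i (Dk (i+1) (Dk i g)) = Dk (i+1) (Dk i (Dk (i+1) g)) := by
  have hσu : S i (ι (X i)) = ι (X (i+1)) := by rw [S_X, Equiv.swap_apply_left]
  have hσv : S i (ι (X (i+1))) = ι (X i) := by rw [S_X, Equiv.swap_apply_right]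
  have hσw : S i (ι (X (i+2))) = ι (X (i+2)) := by
    rw [S_X, Equiv.swap_apply_of_ne_of_ne (by omega) (by omega)]
  have hτu : S (i+1) (ι (X i)) = ι (X i) := by
    rw [S_X, Equiv.swap_apply_of_ne_of_ne (by omega) (by omega)]
  have hτv : S (i+1) (ι (X (i+1))) = ι (X (i+2)) := by
    rw [S_X]
    norm_num [Equiv.swap_apply_left]
  have hτw : S (i+1) (ι (X (i+2))) = ι (X (i+1)) := by
    have h2 : i + 1 + 1 = i + 2 := rfl
    rw [S_X, h2, Equiv.swap_apply_right]
  have huv : ι (X i) - ι (X (i+1)) ≠ 0 := sub_ne_zero.mpr (eXne (by omega))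
  have hvu : ι (X (i+1)) - ι (X i) ≠ 0 := sub_ne_zero.mpr (eXne (by omega))
  have hvw : ι (X (i+1)) - ι (X (i+2)) ≠ 0 := sub_ne_zero.mpr (eXne (by omega))
  have hwv : ι (X (i+2)) - ι (X (i+1)) ≠ 0 := sub_ne_zero.mpr (eXne (by omega))
  have huw : ι (X i) - ι (X (i+2)) ≠ 0 := sub_ne_zero.mpr (eXne (by omega))
  have h2 : i + 1 + 1 = i + 2 := rfl
  simp only [Dk, h2, map_sub, map_mul, map_inv₀, hσu, hσv, hσw, hτu, hτv, hτw, S_invol,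
    S_braid i g]
  exact braid_field _ _ _ _ _ _ _ _ _ huv hvw huw hvu hwv

lemma Dk_comm (i j : ℕ) (h : i + 2 ≤ j) (g : K) : Dk i (Dk j g) = Dk j (Dk i g) := by
  have hij : S i (ι (X j)) = ι (X j) := by
    rw [S_X, Equiv.swap_apply_of_ne_of_ne (by omega) (by omega)]
  have hij1 : S i (ι (X (j+1))) = ι (X (j+1)) := by
    rw [S_X, Equiv.swap_apply_of_ne_of_ne (by omega) (by omega)]
  have hji : S j (ι (X i)) = ι (X i) := by
    rw [S_X, Equiv.swap_apply_of_ne_of_ne (by omega) (by omega)]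
  have hji1 : S j (ι (X (i+1))) = ι (X (i+1)) := by
    rw [S_X, Equiv.swap_apply_of_ne_of_ne (by omega) (by omega)]
  have hd1 : ι (X i) - ι (X (i+1)) ≠ 0 := sub_ne_zero.mpr (eXne (by omega))
  have hd2 : ι (X j) - ι (X (j+1)) ≠ 0 := sub_ne_zero.mpr (eXne (by omega))
  simp only [Dk, map_sub, map_mul, map_inv₀, hij, hij1, hji, hji1, S_comm i j h g]
  exact comm_field _ _ _ _ _ _ _ _ hd1 hd2

end DDAux

open DDAux in
/-- Braid and commutation relations for divided difference operators. -/
theorem divided_difference_braid_and_commutation :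
    (∀ (i : ℕ) (f : MvPolynomial ℕ ℤ),
      dd i (dd (i + 1) (dd i f)) = dd (i + 1) (dd i (dd (i + 1) f))) ∧
    (∀ (i j : ℕ), (i + 2 ≤ j ∨ j + 2 ≤ i) →
      ∀ f : MvPolynomial ℕ ℤ, dd i (dd j f) = dd j (dd i f)) := by
  constructor
  · intro i f
    apply ι_inj
    simp only [hdd]
    exact Dk_braid i (ι f)
  · intro i j hij f
    apply ι_inj
    simp only [hdd]
    rcases hij with h | h
    · exact Dk_comm i j h (ι f)
    · exact (Dk_comm j i h (ι f)).symm
end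

section
/- Let π ∈ S_n with ℓ(π) = ℓ and let (𝐚, 𝐫) be a compatible sequence of π. Define cross coordinates (r_k, j_k) by j_k = a_k − r_k + 1. Then these ℓ coordinates are pairwise distinct, and within each fixed row index r, the column indices j_k are strictly decreasing as k increases. -/
/-- Coxeter length (number of inversions) of a finitely supported permutation of `ℕ`
(0-indexed model of `S_∞`). -/
noncomputable def lenInf (π : Equiv.Perm ℕ) : ℕ :=
  Set.ncard {p : ℕ × ℕ | p.1 < p.2 ∧ π p.2 < π p.1}

/-- The simple transposition `s_{i+1}` (0-indexed: swaps `i` and `i+1`). -/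
def simpleSwap (i : ℕ) : Equiv.Perm ℕ := Equiv.swap i (i + 1)

/-- `(a, r)` is a (reduced) compatible sequence of `π` (everything 0-indexed):
`a` is a reduced word of `π`, `r` is weakly increasing, `r_j ≤ a_j`, and
`r_j < r_{j+1}` whenever `a_j < a_{j+1}`. -/
def IsCompatible (π : Equiv.Perm ℕ) (ℓ : ℕ) (a r : Fin ℓ → ℕ) : Prop :=
  (List.ofFn fun k => simpleSwap (a k)).prod = π ∧ ℓ = lenInf π ∧
  Monotone r ∧ (∀ k, r k ≤ a k) ∧
  ∀ (k : Fin ℓ) (h : (k : ℕ) + 1 < ℓ), a k < a ⟨k + 1, h⟩ → r k < r ⟨k + 1, h⟩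

lemma swap_lt_aux (i u v : ℕ) (h : Equiv.swap i (i + 1) v < Equiv.swap i (i + 1) u) :
    v < u ∨ (u = i ∧ v = i + 1) := by
  simp only [Equiv.swap_apply_def] at h
  split_ifs at h <;> omega

lemma inv_subset (i : ℕ) (σ : Equiv.Perm ℕ) :
    {p : ℕ × ℕ | p.1 < p.2 ∧ (simpleSwap i * σ) p.2 < (simpleSwap i * σ) p.1} ⊆
      insert (σ⁻¹ i, σ⁻¹ (i + 1)) {p : ℕ × ℕ | p.1 < p.2 ∧ σ p.2 < σ p.1} := by
  rintro ⟨p, q⟩ ⟨hpq, hlt⟩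
  simp only [simpleSwap, Equiv.Perm.mul_apply] at hlt
  rcases swap_lt_aux i (σ p) (σ q) hlt with h | ⟨h1, h2⟩
  · exact Or.inr ⟨hpq, h⟩
  · left
    rw [← h2, ← h1]
    simp [Prod.ext_iff]

lemma lenInf_swap_mul_le (i : ℕ) (σ : Equiv.Perm ℕ) :
    lenInf (simpleSwap i * σ) ≤ lenInf σ + 1 := by
  have h1 := inv_subset i σ
  have hss : simpleSwap i * (simpleSwap i * σ) = σ := by
    rw [← mul_assoc]
    simp [simpleSwap, Equiv.swap_mul_self]
  have h2 := inv_subset i (simpleSwap i * σ)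
  rw [hss] at h2
  by_cases hfin : {p : ℕ × ℕ | p.1 < p.2 ∧ σ p.2 < σ p.1}.Finite
  · unfold lenInf
    calc {p : ℕ × ℕ | p.1 < p.2 ∧ (simpleSwap i * σ) p.2 < (simpleSwap i * σ) p.1}.ncard
        ≤ (insert (σ⁻¹ i, σ⁻¹ (i + 1))
            {p : ℕ × ℕ | p.1 < p.2 ∧ σ p.2 < σ p.1}).ncard :=
          Set.ncard_le_ncard h1 (hfin.insert _)
      _ ≤ {p : ℕ × ℕ | p.1 < p.2 ∧ σ p.2 < σ p.1}.ncard + 1 := Set.ncard_insert_le _ _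
  · have hinf : ¬ {p : ℕ × ℕ | p.1 < p.2 ∧
        (simpleSwap i * σ) p.2 < (simpleSwap i * σ) p.1}.Finite := by
      intro hf
      exact hfin (Set.Finite.subset (hf.insert _) h2)
    unfold lenInf
    rw [Set.Infinite.ncard hinf]
    exact Nat.zero_le _

lemma lenInf_one : lenInf (1 : Equiv.Perm ℕ) = 0 := by
  unfold lenInf
  convert Set.ncard_empty (ℕ × ℕ)
  ext ⟨p, q⟩
  simp only [Set.mem_setOf_eq, Equiv.Perm.one_apply, Set.mem_empty_iff_false, iff_false]
  omega

lemma lenInf_prod_le (L : List ℕ) : lenInf (L.map simpleSwap).prod ≤ L.length := by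
  induction L with
  | nil => simp [lenInf_one]
  | cons i L ih =>
      simp only [List.map_cons, List.prod_cons, List.length_cons]
      exact le_trans (lenInf_swap_mul_le i _) (by omega)

/-- The cross coordinates `(r_k, a_k − r_k + 1)` of a compatible sequence are pairwise
distinct, and within a fixed row the column indices strictly decrease. -/
theorem compatible_sequence_cross_coordinates (π : Equiv.Perm ℕ) (ℓ : ℕ) (a r : Fin ℓ → ℕ)
    (h : IsCompatible π ℓ a r) :
    Function.Injective (fun k : Fin ℓ => (r k, a k - r k + 1)) ∧
    ∀ k k' : Fin ℓ, k < k' → r k = r k' → a k' - r k' + 1 < a k - r k + 1 := by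
  obtain ⟨hprod, hlen, hmono, hle, hinc⟩ := h
  -- the word has no two adjacent equal letters (reducedness)
  have hprod' : ((List.ofFn a).map simpleSwap).prod = π := by
    rw [List.map_ofFn]; exact hprod
  have hadj_ne : ∀ (k : Fin ℓ) (hk : (k : ℕ) + 1 < ℓ), a k ≠ a ⟨k + 1, hk⟩ := by
    intro k hk heq
    set L : List ℕ := List.ofFn a with hL
    have hlenL : L.length = ℓ := List.length_ofFn
    have hkL : (k : ℕ) + 1 < L.length := by omega
    have hk0 : (k : ℕ) < L.length := by omega
    have hget1 : L[(k : ℕ)] = a k := by simp [hL]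
    have hget2 : L[(k : ℕ) + 1] = a ⟨k + 1, hk⟩ := by simp [hL]
    have hsplit : L = L.take k ++ L.drop k := (List.take_append_drop _ _).symm
    have hdrop1 : L.drop (k : ℕ) = L[(k : ℕ)] :: L.drop ((k : ℕ) + 1) :=
      List.drop_eq_getElem_cons hk0
    have hdrop2 : L.drop ((k : ℕ) + 1) = L[(k : ℕ) + 1] :: L.drop ((k : ℕ) + 2) :=
      List.drop_eq_getElem_cons hkL
    have hπ : π = ((L.take (k : ℕ) ++ L.drop ((k : ℕ) + 2)).map simpleSwap).prod := by
      conv_lhs => rw [← hprod']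
      conv_lhs => rw [hsplit, hdrop1, hdrop2]
      simp only [List.map_append, List.prod_append, List.map_cons, List.prod_cons]
      rw [hget1, hget2, heq, ← mul_assoc, ← mul_assoc]
      have : simpleSwap (a ⟨k + 1, hk⟩) * simpleSwap (a ⟨k + 1, hk⟩) = 1 := by
        simp [simpleSwap, Equiv.swap_mul_self]
      rw [mul_assoc (List.prod _), this, mul_one]
    have hbound := lenInf_prod_le (L.take (k : ℕ) ++ L.drop ((k : ℕ) + 2))
    rw [← hπ] at hbound
    have hlen2 : (L.take (k : ℕ) ++ L.drop ((k : ℕ) + 2)).length = ℓ - 2 := by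
      simp only [List.length_append, List.length_take, List.length_drop]
      omega
    omega
  -- adjacent step: equal rows force strictly decreasing letters
  have hadj : ∀ (k : Fin ℓ) (hk : (k : ℕ) + 1 < ℓ),
      r k = r ⟨k + 1, hk⟩ → a ⟨k + 1, hk⟩ < a k := by
    intro k hk hr
    rcases lt_or_ge (a ⟨k + 1, hk⟩) (a k) with h' | h'
    · exact h'
    rcases h'.lt_or_eq with h'' | h''
    · exact absurd hr (ne_of_lt (hinc k hk h''))
    · exact absurd h'' (hadj_ne k hk)
  -- general decreasing within a constant row
  have hdec : ∀ d : ℕ, ∀ k k' : Fin ℓ, (k' : ℕ) = (k : ℕ) + d + 1 → r k = r k' →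
      a k' < a k := by
    intro d
    induction d with
    | zero =>
        intro k k' hkk hr
        have hk1 : (k : ℕ) + 1 < ℓ := by have := k'.isLt; omega
        have hk' : k' = ⟨(k : ℕ) + 1, hk1⟩ := Fin.ext (by simpa using hkk)
        subst hk'
        exact hadj k hk1 hr
    | succ d ih =>
        intro k k' hkk hr
        have hk1 : (k : ℕ) + 1 < ℓ := by have := k'.isLt; omega
        set k1 : Fin ℓ := ⟨(k : ℕ) + 1, hk1⟩ with hk1def
        have hle1 : r k ≤ r k1 := hmono (by simp [hk1def, Fin.le_def])
        have hle2 : r k1 ≤ r k' := hmono (by simp [hk1def, Fin.le_def]; omega)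
        have hr1 : r k = r k1 := le_antisymm hle1 (by rw [hr]; exact hle2)
        have hr2 : r k1 = r k' := by rw [← hr1, hr]
        have h1 : a k' < a k1 := ih k1 k' (by simp [hk1def]; omega) hr2
        have h2 : a k1 < a k := hadj k hk1 hr1
        exact h1.trans h2
  have hsecond : ∀ k k' : Fin ℓ, k < k' → r k = r k' →
      a k' - r k' + 1 < a k - r k + 1 := by
    intro k k' hkk hr
    have hlt : a k' < a k := hdec ((k' : ℕ) - (k : ℕ) - 1) k k'
      (by have := Fin.lt_def.mp hkk; omega) hr
    have := hle k'
    omega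
  refine ⟨?_, hsecond⟩
  intro k k' heq
  simp only [Prod.mk.injEq] at heq
  obtain ⟨hr, hc⟩ := heq
  by_contra hne
  rcases Ne.lt_or_gt hne with hlt | hlt
  · exact absurd hc (ne_of_gt (hsecond k k' hlt hr))
  · exact absurd hc (ne_of_lt (hsecond k' k hlt hr.symm))
end
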